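/- A function D: I_M^L → [0,1] is an irreducible discrete copula (a discrete copula with range exactly I_M) if and only if there exists an L-dimensional permutation array A (a stochastic array with all entries in {0,1}) such that D(i₁/M,…,i_L/M) = (1/M) Σ_{ν₁≤i₁} ⋯ Σ_{ν_L≤i_L} a_{ν₁…ν_L}. -/

import Mathlib

open Finset

/-- The sign `(-1)^{#{ℓ : ε ℓ = false}}` appearing in `L`-fold first-order differences. -/
def boxSign {L : ℕ} (ε : Fin L → Bool) : ℝ :=
  (-1 : ℝ) ^ (Finset.univ.filter (fun ℓ => ε ℓ = false)).card

/-- `D` is a discrete copula on `I_M^L`: the lattice point `(i₁/M, …, i_L/M)` is encoded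
by an index vector `i : Fin L → ℕ` with `i ℓ ≤ M`.  The conditions are: values in `[0,1]`,
groundedness (D1), uniform margins (D2), and `L`-increasingness over unit lattice boxes (D3). -/
def IsDiscreteCopula (M L : ℕ) (D : (Fin L → ℕ) → ℝ) : Prop :=
  (∀ i : Fin L → ℕ, (∀ ℓ, i ℓ ≤ M) → D i ∈ Set.Icc (0 : ℝ) 1) ∧
  (∀ i : Fin L → ℕ, (∀ ℓ, i ℓ ≤ M) → (∃ ℓ, i ℓ = 0) → D i = 0) ∧
  (∀ ℓ : Fin L, ∀ k : ℕ, k ≤ M →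
    D (fun l => if l = ℓ then k else M) = (k : ℝ) / M) ∧
  (∀ i : Fin L → ℕ, (∀ ℓ, 1 ≤ i ℓ ∧ i ℓ ≤ M) →
    0 ≤ ∑ ε : Fin L → Bool,
        boxSign ε * D (fun ℓ => if ε ℓ then i ℓ else i ℓ - 1))

/-- An irreducible discrete copula: a discrete copula whose range on the lattice is exactly
`I_M = {0, 1/M, …, 1}`. -/
def IsIrreducibleDiscreteCopula (M L : ℕ) (D : (Fin L → ℕ) → ℝ) : Prop :=
  IsDiscreteCopula M L D ∧
  (∀ i : Fin L → ℕ, (∀ ℓ, i ℓ ≤ M) → ∃ k ≤ M, D i = (k : ℝ) / M) ∧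
  (∀ k : ℕ, k ≤ M → ∃ i : Fin L → ℕ, (∀ ℓ, i ℓ ≤ M) ∧ D i = (k : ℝ) / M)

/-- An `L`-dimensional stochastic array of order `M`: nonnegative entries (indexed by
`ν : Fin L → Fin M`, where `ν ℓ` encodes the index `ν ℓ + 1 ∈ {1,…,M}`), and every line sum
(fixing one index and summing over the others) equals `1`. -/
def IsStochasticArray (M L : ℕ) (A : (Fin L → Fin M) → ℝ) : Prop :=
  (∀ ν, 0 ≤ A ν) ∧
  (∀ ℓ : Fin L, ∀ j : Fin M,
    ∑ ν : Fin L → Fin M, (if ν ℓ = j then A ν else 0) = 1)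

/-- A permutation array: a stochastic array all of whose entries lie in `{0, 1}`. -/
def IsPermutationArray (M L : ℕ) (A : (Fin L → Fin M) → ℝ) : Prop :=
  IsStochasticArray M L A ∧ ∀ ν, A ν = 0 ∨ A ν = 1

/-- The normalized cumulative sum `(1/M) Σ_{ν₁ ≤ i₁} ⋯ Σ_{ν_L ≤ i_L} a_{ν₁…ν_L}`
(with `ν ℓ + 1 ≤ i ℓ` in the `Fin M` encoding; empty sums are zero). -/
noncomputable def cumSum (M L : ℕ) (A : (Fin L → Fin M) → ℝ) (i : Fin L → ℕ) : ℝ :=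
  (1 / (M : ℝ)) * ∑ ν : Fin L → Fin M, (if ∀ ℓ, (ν ℓ : ℕ) < i ℓ then A ν else 0)

lemma boxSign_eq_prod {L : ℕ} (ε : Fin L → Bool) :
    boxSign ε = ∏ ℓ, (if ε ℓ then (1:ℝ) else -1) := by
  rw [boxSign, Finset.prod_ite, Finset.prod_const_one, one_mul, Finset.prod_const]
  congr 2
  apply Finset.filter_congr
  intro x _
  simp

lemma sum_bool_prod {L : ℕ} (f : Fin L → Bool → ℝ) :
    ∑ ε : Fin L → Bool, ∏ ℓ, f ℓ (ε ℓ) = ∏ ℓ, (f ℓ true + f ℓ false) := by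
  have h : ∀ ℓ : Fin L, f ℓ true + f ℓ false = ∑ b : Bool, f ℓ b := by
    intro ℓ; simp
  rw [Finset.prod_congr rfl (fun ℓ _ => h ℓ), Finset.prod_univ_sum,
    Fintype.piFinset_univ]

lemma prod_ind {L M : ℕ} (ν ν₀ : Fin L → Fin M) :
    ∏ ℓ, (if ν ℓ = ν₀ ℓ then (1:ℝ) else 0) = if ν = ν₀ then 1 else 0 := by
  by_cases h : ν = ν₀
  · subst h; simp
  · rw [if_neg h]
    obtain ⟨ℓ, hℓ⟩ : ∃ ℓ, ν ℓ ≠ ν₀ ℓ := by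
      by_contra hc; push_neg at hc; exact h (funext hc)
    exact Finset.prod_eq_zero (Finset.mem_univ ℓ) (by simp [hℓ])

lemma ite_forall_prod {L : ℕ} (P : Fin L → Prop) [DecidablePred P] :
    (if ∀ ℓ, P ℓ then (1:ℝ) else 0) = ∏ ℓ, (if P ℓ then (1:ℝ) else 0) := by
  by_cases h : ∀ ℓ, P ℓ
  · simp [h]
  · rw [if_neg h]
    push_neg at h
    obtain ⟨ℓ, hℓ⟩ := h
    exact (Finset.prod_eq_zero (Finset.mem_univ ℓ) (by simp [hℓ])).symm

lemma box_cumSum {M L : ℕ} (A : (Fin L → Fin M) → ℝ)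
    (i : Fin L → ℕ) (hi : ∀ ℓ, 1 ≤ i ℓ ∧ i ℓ ≤ M) :
    ∑ ε : Fin L → Bool, boxSign ε * cumSum M L A (fun ℓ => if ε ℓ then i ℓ else i ℓ - 1)
      = (1 / (M:ℝ)) * A (fun ℓ => ⟨i ℓ - 1, by have := hi ℓ; omega⟩) := by
  set ν₀ : Fin L → Fin M := fun ℓ => ⟨i ℓ - 1, by have := hi ℓ; omega⟩ with hν₀
  calc ∑ ε : Fin L → Bool, boxSign ε * cumSum M L A (fun ℓ => if ε ℓ then i ℓ else i ℓ - 1)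
      = (1/(M:ℝ)) * ∑ ν : Fin L → Fin M, ∑ ε : Fin L → Bool,
          boxSign ε * (if ∀ ℓ, (ν ℓ:ℕ) < (if ε ℓ then i ℓ else i ℓ - 1) then A ν else 0) := by
        simp only [cumSum]
        rw [Finset.sum_comm]
        simp only [Finset.mul_sum]
        exact Finset.sum_congr rfl fun ε _ => Finset.sum_congr rfl fun ν _ => by ring
    _ = (1/(M:ℝ)) * ∑ ν : Fin L → Fin M, (if ν = ν₀ then A ν else 0) := by
        congr 1
        apply Finset.sum_congr rfl; intro ν _
        calc ∑ ε : Fin L → Bool,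
              boxSign ε * (if ∀ ℓ, (ν ℓ:ℕ) < (if ε ℓ then i ℓ else i ℓ - 1) then A ν else 0)
            = ∑ ε : Fin L → Bool, (∏ ℓ, ((if ε ℓ then (1:ℝ) else -1) *
                (if (ν ℓ:ℕ) < (if ε ℓ then i ℓ else i ℓ - 1) then (1:ℝ) else 0))) * A ν := by
              apply Finset.sum_congr rfl; intro ε _
              rw [Finset.prod_mul_distrib, ← boxSign_eq_prod, ← ite_forall_prod]
              by_cases h : ∀ ℓ, (ν ℓ:ℕ) < (if ε ℓ then i ℓ else i ℓ - 1) <;> simp [h]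
          _ = (∏ ℓ, ((if (ν ℓ:ℕ) < i ℓ then (1:ℝ) else 0) +
                (-1) * (if (ν ℓ:ℕ) < i ℓ - 1 then (1:ℝ) else 0))) * A ν := by
              rw [← Finset.sum_mul]
              congr 1
              rw [sum_bool_prod (fun ℓ b => (if b then (1:ℝ) else -1) *
                (if (ν ℓ:ℕ) < (if b then i ℓ else i ℓ - 1) then (1:ℝ) else 0))]
              apply Finset.prod_congr rfl; intro ℓ _
              norm_num
          _ = (if ν = ν₀ then 1 else 0) * A ν := by
              rw [← prod_ind ν ν₀]
              congr 1
              apply Finset.prod_congr rfl; intro ℓ _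
              have h1 := (hi ℓ).1
              simp only [hν₀, Fin.ext_iff]
              rcases Nat.lt_trichotomy ((ν ℓ : ℕ)) (i ℓ - 1) with h|h|h
              · rw [if_pos (by omega), if_pos h, if_neg (by omega)]; norm_num
              · rw [if_pos (by omega), if_neg (by omega), if_pos h]; norm_num
              · rw [if_neg (by omega), if_neg (by omega), if_neg (by omega)]; norm_num
          _ = if ν = ν₀ then A ν else 0 := by split_ifs <;> ring
    _ = (1/(M:ℝ)) * A ν₀ := by simp

lemma eq_zero_of_grounded_boxzero {M L : ℕ} (F : (Fin L → ℕ) → ℝ)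
    (hg : ∀ i : Fin L → ℕ, (∀ ℓ, i ℓ ≤ M) → (∃ ℓ, i ℓ = 0) → F i = 0)
    (hb : ∀ i : Fin L → ℕ, (∀ ℓ, 1 ≤ i ℓ ∧ i ℓ ≤ M) →
      ∑ ε : Fin L → Bool, boxSign ε * F (fun ℓ => if ε ℓ then i ℓ else i ℓ - 1) = 0) :
    ∀ i : Fin L → ℕ, (∀ ℓ, i ℓ ≤ M) → F i = 0 := by
  suffices H : ∀ n, ∀ i : Fin L → ℕ, (∀ ℓ, i ℓ ≤ M) → (∑ ℓ, i ℓ) = n → F i = 0 by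
    intro i hi; exact H _ i hi rfl
  intro n
  induction n using Nat.strong_induction_on with
  | _ n ih =>
    intro i hi hn
    by_cases h0 : ∃ ℓ, i ℓ = 0
    · exact hg i hi h0
    · push_neg at h0
      have hi1 : ∀ ℓ, 1 ≤ i ℓ ∧ i ℓ ≤ M := fun ℓ => ⟨Nat.one_le_iff_ne_zero.2 (h0 ℓ), hi ℓ⟩
      have hbz := hb i hi1
      rw [Finset.sum_eq_single (fun _ => true)] at hbz
      · simpa [boxSign] using hbz
      · intro ε _ hε
        obtain ⟨ℓ, hℓ⟩ : ∃ ℓ, ε ℓ = false := by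
          by_contra hc; push_neg at hc
          exact hε (funext fun ℓ => by simpa using hc ℓ)
        have hz : F (fun l => if ε l then i l else i l - 1) = 0 := by
          have hsum : (∑ l, (if ε l then i l else i l - 1)) < n := by
            rw [← hn]
            apply Finset.sum_lt_sum
            · intro l _; split <;> omega
            · exact ⟨ℓ, Finset.mem_univ ℓ, by
                rw [hℓ]; simp only [Bool.false_eq_true, if_false]
                have := (hi1 ℓ).1; omega⟩
          exact ih _ hsum _ (fun l => by have := hi l; split <;> omega) rfl
        rw [hz, mul_zero]
      · intro h; exact absurd (Finset.mem_univ _) h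

lemma total_sum {M L : ℕ} (A : (Fin L → Fin M) → ℝ) (ℓ₀ : Fin L)
    (hline : ∀ j : Fin M, ∑ ν : Fin L → Fin M, (if ν ℓ₀ = j then A ν else 0) = 1) :
    ∑ ν : Fin L → Fin M, A ν = M := by
  have h : ∑ j : Fin M, ∑ ν : Fin L → Fin M, (if ν ℓ₀ = j then A ν else 0) = M := by
    simp [hline]
  rw [Finset.sum_comm] at h
  simpa using h

lemma partial_line_sum {M L : ℕ} (A : (Fin L → Fin M) → ℝ) (ℓ₀ : Fin L)
    (hline : ∀ j : Fin M, ∑ ν : Fin L → Fin M, (if ν ℓ₀ = j then A ν else 0) = 1)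
    (k : ℕ) (hk : k ≤ M) :
    ∑ ν : Fin L → Fin M, (if (ν ℓ₀ : ℕ) < k then A ν else 0) = k := by
  calc ∑ ν : Fin L → Fin M, (if (ν ℓ₀ : ℕ) < k then A ν else 0)
      = ∑ ν : Fin L → Fin M, ∑ j : Fin M,
          (if (j:ℕ) < k then if ν ℓ₀ = j then A ν else 0 else 0) := by
        refine Finset.sum_congr rfl fun ν _ => ?_
        symm
        rw [Finset.sum_eq_single (ν ℓ₀)]
        · simp
        · intro j _ hj
          simp [Ne.symm hj]
        · intro h; exact absurd (Finset.mem_univ _) h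
    _ = ∑ j : Fin M, ∑ ν : Fin L → Fin M,
          (if (j:ℕ) < k then if ν ℓ₀ = j then A ν else 0 else 0) := Finset.sum_comm
    _ = ∑ j : Fin M, (if (j:ℕ) < k then (1:ℝ) else 0) := by
        refine Finset.sum_congr rfl fun j _ => ?_
        by_cases hj : (j:ℕ) < k
        · simp only [hj, if_true]; exact hline j
        · simp [hj]
    _ = ∑ j ∈ Finset.range M, (if j < k then (1:ℝ) else 0) :=
        Fin.sum_univ_eq_sum_range (fun j => if j < k then (1:ℝ) else 0) M
    _ = ∑ j ∈ Finset.range k, (1:ℝ) := by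
        rw [← Finset.sum_filter]
        congr 1
        ext j; simp; omega
    _ = k := by simp

/-- `D` is an irreducible discrete copula iff it is the cumulative sum of some
`L`-dimensional permutation array. -/
theorem irreducibleDiscreteCopula_iff_permutationArray (M L : ℕ) (hM : 0 < M) (hL : 2 ≤ L)
    (D : (Fin L → ℕ) → ℝ) :
    IsIrreducibleDiscreteCopula M L D ↔
      ∃ A : (Fin L → Fin M) → ℝ, IsPermutationArray M L A ∧
        ∀ i : Fin L → ℕ, (∀ ℓ, i ℓ ≤ M) → D i = cumSum M L A i := by
  have hMR : (0:ℝ) < M := Nat.cast_pos.2 hM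
  have hM0 : (M:ℝ) ≠ 0 := ne_of_gt hMR
  have ℓ₀ : Fin L := ⟨0, by omega⟩
  constructor
  · rintro ⟨⟨hval01, hgr, hmar, hbox⟩, hran, -⟩
    set A : (Fin L → Fin M) → ℝ := fun ν =>
      M * ∑ ε : Fin L → Bool, boxSign ε *
        D (fun ℓ => if ε ℓ then (ν ℓ:ℕ)+1 else (ν ℓ:ℕ)) with hA
    have hAbox : ∀ (ν : Fin L → Fin M) (i : Fin L → ℕ), (∀ ℓ, i ℓ = (ν ℓ:ℕ)+1) →
        A ν = M * ∑ ε : Fin L → Bool, boxSign ε *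
          D (fun ℓ => if ε ℓ then i ℓ else i ℓ - 1) := by
      intro ν i hiν
      simp only [hA]
      congr 1
      apply Finset.sum_congr rfl; intro ε _
      congr 2
      funext ℓ
      rw [hiν ℓ]
      split <;> omega
    have hA0 : ∀ ν, 0 ≤ A ν := by
      intro ν
      have h := hbox (fun ℓ => (ν ℓ:ℕ)+1)
        (fun ℓ => ⟨by show 1 ≤ (ν ℓ:ℕ)+1; omega,
          by show (ν ℓ:ℕ)+1 ≤ M; have := (ν ℓ).isLt; omega⟩)
      rw [hAbox ν (fun ℓ => (ν ℓ:ℕ)+1) (fun ℓ => rfl)]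
      exact mul_nonneg (Nat.cast_nonneg M) h
    have hgr' : ∀ i : Fin L → ℕ, (∀ ℓ, i ℓ ≤ M) → (∃ ℓ, i ℓ = 0) → cumSum M L A i = 0 := by
      rintro i hi ⟨ℓ, hℓ⟩
      simp only [cumSum]
      rw [Finset.sum_eq_zero, mul_zero]
      intro ν _
      rw [if_neg]
      intro hc
      have := hc ℓ
      omega
    have hDC : ∀ i : Fin L → ℕ, (∀ ℓ, i ℓ ≤ M) → D i = cumSum M L A i := by
      have key := eq_zero_of_grounded_boxzero (M := M)
        (fun j => D j - cumSum M L A j)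
        (fun j hj h0 => by
          show D j - cumSum M L A j = 0
          rw [hgr j hj h0, hgr' j hj h0, sub_zero])
        (fun j hj => by
          simp only [mul_sub]
          rw [Finset.sum_sub_distrib, box_cumSum A j hj,
            hAbox (fun ℓ => ⟨j ℓ - 1, by have := hj ℓ; omega⟩) j
              (fun ℓ => by have := (hj ℓ).1; show j ℓ = j ℓ - 1 + 1; omega)]
          field_simp; simp)
      intro i hi
      exact sub_eq_zero.mp (key i hi)
    have hslice : ∀ (ℓ : Fin L) (k : ℕ), k ≤ M →
        ∑ ν : Fin L → Fin M, (if (ν ℓ:ℕ) < k then A ν else 0) = k := by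
      intro ℓ k hk
      have hD := hmar ℓ k hk
      rw [hDC _ (fun l => by split <;> omega)] at hD
      simp only [cumSum] at hD
      have hcg : ∑ ν : Fin L → Fin M, (if (ν ℓ:ℕ) < k then A ν else 0)
          = ∑ ν : Fin L → Fin M,
            (if ∀ l, (ν l:ℕ) < (if l = ℓ then k else M) then A ν else 0) := by
        refine Finset.sum_congr rfl fun ν _ => ?_
        refine (if_congr ?_ rfl rfl)
        constructor
        · intro h l
          by_cases hl : l = ℓ
          · subst hl; simpa using h
          · simp only [hl, if_false]; exact (ν l).isLt
        · intro h; simpa using h ℓ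
      rw [hcg]
      have h2 : (M:ℝ) * ((1/(M:ℝ)) * ∑ ν : Fin L → Fin M,
          (if ∀ l, (ν l:ℕ) < (if l = ℓ then k else M) then A ν else 0))
          = (M:ℝ) * ((k:ℝ)/M) := by rw [hD]
      field_simp at h2
      rw [h2]
    have hline : ∀ (ℓ : Fin L) (j : Fin M),
        ∑ ν : Fin L → Fin M, (if ν ℓ = j then A ν else 0) = 1 := by
      intro ℓ j
      have e : ∀ ν : Fin L → Fin M, (if ν ℓ = j then A ν else 0)
          = (if (ν ℓ:ℕ) < (j:ℕ)+1 then A ν else 0)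
            - (if (ν ℓ:ℕ) < (j:ℕ) then A ν else 0) := by
        intro ν
        rcases Nat.lt_trichotomy ((ν ℓ:ℕ)) ((j:ℕ)) with h|h|h
        · rw [if_neg (fun hc => by rw [Fin.ext_iff] at hc; omega),
            if_pos (by omega), if_pos h]; ring
        · rw [if_pos (Fin.ext h), if_pos (by omega), if_neg (by omega)]; ring
        · rw [if_neg (fun hc => by rw [Fin.ext_iff] at hc; omega),
            if_neg (by omega), if_neg (by omega)]; ring
      rw [Finset.sum_congr rfl (fun ν _ => e ν), Finset.sum_sub_distrib,
        hslice ℓ ((j:ℕ)+1) (by have := j.isLt; omega),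
        hslice ℓ (j:ℕ) (by have := j.isLt; omega)]
      push_cast
      ring
    have hA1 : ∀ ν, A ν ≤ 1 := by
      intro ν
      have h2 : A ν ≤ ∑ ν' : Fin L → Fin M, (if ν' ℓ₀ = ν ℓ₀ then A ν' else 0) := by
        have := Finset.single_le_sum
          (f := fun ν' : Fin L → Fin M => if ν' ℓ₀ = ν ℓ₀ then A ν' else 0)
          (fun ν' _ => by split; exacts [hA0 ν', le_refl 0])
          (Finset.mem_univ ν)
        simpa using this
      exact le_of_le_of_eq h2 (hline ℓ₀ (ν ℓ₀))
    have hint : ∀ ν : Fin L → Fin M, ∃ z : ℤ, A ν = z := by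
      intro ν
      have hco : ∀ ε : Fin L → Bool, ∀ ℓ,
          (if ε ℓ then (ν ℓ:ℕ)+1 else (ν ℓ:ℕ)) ≤ M := by
        intro ε ℓ; have := (ν ℓ).isLt; split <;> omega
      choose k hk hDk using fun ε : Fin L → Bool => hran _ (hco ε)
      refine ⟨∑ ε : Fin L → Bool,
        (-1:ℤ) ^ (Finset.univ.filter (fun ℓ => ε ℓ = false)).card * (k ε : ℤ), ?_⟩
      have hAe : A ν = ∑ ε : Fin L → Bool, boxSign ε * (k ε : ℝ) := by
        simp only [hA]
        rw [Finset.mul_sum]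
        apply Finset.sum_congr rfl; intro ε _
        rw [hDk ε]
        field_simp
      rw [hAe]
      simp only [boxSign]
      push_cast
      ring
    have h01 : ∀ ν, A ν = 0 ∨ A ν = 1 := by
      intro ν
      obtain ⟨z, hz⟩ := hint ν
      have h0 : (0:ℝ) ≤ (z:ℝ) := hz ▸ hA0 ν
      have h1 : (z:ℝ) ≤ 1 := hz ▸ hA1 ν
      have hz0 : (0:ℤ) ≤ z := by exact_mod_cast h0
      have hz1 : z ≤ 1 := by exact_mod_cast h1
      have : z = 0 ∨ z = 1 := by omega
      rcases this with h | h
      · left; rw [hz, h]; norm_num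
      · right; rw [hz, h]; norm_num
    exact ⟨A, ⟨⟨hA0, hline⟩, h01⟩, hDC⟩
  · rintro ⟨A, ⟨⟨hA0, hline⟩, h01⟩, hDC⟩
    have hcount : ∀ i : Fin L → ℕ, ∃ k : ℕ, k ≤ M ∧
        (∑ ν : Fin L → Fin M, (if ∀ ℓ, (ν ℓ:ℕ) < i ℓ then A ν else 0)) = k := by
      intro i
      set s := Finset.univ.filter
        (fun ν : Fin L → Fin M => (∀ ℓ, (ν ℓ:ℕ) < i ℓ) ∧ A ν = 1) with hs
      refine ⟨s.card, ?_, ?_⟩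
      · have hle : (s.card : ℝ) ≤ M := by
          have e1 : (s.card:ℝ) = ∑ ν ∈ s, A ν := by
            rw [Finset.sum_congr rfl
              (fun ν hν => ((Finset.mem_filter.1 hν).2.2 : A ν = 1))]
            simp
          rw [e1, ← total_sum A ⟨0, by omega⟩ (hline ⟨0, by omega⟩)]
          exact Finset.sum_le_sum_of_subset_of_nonneg (Finset.subset_univ s)
            (fun ν _ _ => hA0 ν)
        exact_mod_cast hle
      · rw [← Finset.sum_filter]
        set t := Finset.univ.filter
          (fun ν : Fin L → Fin M => ∀ ℓ, (ν ℓ:ℕ) < i ℓ) with ht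
        rw [← Finset.sum_filter_add_sum_filter_not t (fun ν => A ν = 1) A]
        have hts : t.filter (fun ν => A ν = 1) = s := by
          rw [ht, hs, Finset.filter_filter]
        have e1 : ∑ ν ∈ t.filter (fun ν => A ν = 1), A ν = (s.card : ℝ) := by
          rw [hts, Finset.sum_congr rfl
            (fun ν hν => ((Finset.mem_filter.1 hν).2.2 : A ν = 1))]
          simp
        have e0 : ∑ ν ∈ t.filter (fun ν => ¬ A ν = 1), A ν = 0 :=
          Finset.sum_eq_zero fun ν hν =>
            (h01 ν).resolve_right (Finset.mem_filter.1 hν).2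
        rw [e1, e0, add_zero]
    have hmar : ∀ (ℓ : Fin L) (k : ℕ), k ≤ M →
        D (fun l => if l = ℓ then k else M) = (k:ℝ)/M := by
      intro ℓ k hk
      rw [hDC _ (fun l => by split <;> omega)]
      simp only [cumSum]
      have hcg : ∑ ν : Fin L → Fin M,
          (if ∀ l, (ν l:ℕ) < (if l = ℓ then k else M) then A ν else 0)
          = ∑ ν : Fin L → Fin M, (if (ν ℓ:ℕ) < k then A ν else 0) := by
        refine Finset.sum_congr rfl fun ν _ => if_congr ?_ rfl rfl
        constructor
        · intro h; simpa using h ℓ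
        · intro h l
          by_cases hl : l = ℓ
          · subst hl; simpa using h
          · simp only [hl, if_false]; exact (ν l).isLt
      rw [hcg, partial_line_sum A ℓ (hline ℓ) k hk]
      ring
    refine ⟨⟨?_, ?_, hmar, ?_⟩, ?_, ?_⟩
    · intro i hi
      obtain ⟨k, hkM, hkS⟩ := hcount i
      rw [hDC i hi]
      simp only [cumSum]
      rw [hkS]
      constructor
      · positivity
      · rw [show (1/(M:ℝ)) * k = (k:ℝ)/M by ring]
        rw [div_le_one hMR]
        exact_mod_cast hkM
    · rintro i hi ⟨ℓ, hℓ⟩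
      rw [hDC i hi]
      simp only [cumSum]
      rw [Finset.sum_eq_zero, mul_zero]
      intro ν _
      rw [if_neg]
      intro hc
      have := hc ℓ
      omega
    · intro i hi
      have hrw : ∑ ε : Fin L → Bool, boxSign ε *
          D (fun ℓ => if ε ℓ then i ℓ else i ℓ - 1)
          = ∑ ε : Fin L → Bool, boxSign ε *
            cumSum M L A (fun ℓ => if ε ℓ then i ℓ else i ℓ - 1) :=
        Finset.sum_congr rfl fun ε _ => by
          rw [hDC _ (fun ℓ => by have := (hi ℓ).2; split <;> omega)]
      rw [hrw, box_cumSum A i hi]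
      exact mul_nonneg (by positivity) (hA0 _)
    · intro i hi
      obtain ⟨k, hkM, hkS⟩ := hcount i
      exact ⟨k, hkM, by rw [hDC i hi]; simp only [cumSum]; rw [hkS]; ring⟩
    · intro k hk
      exact ⟨fun l => if l = ℓ₀ then k else M,
        fun l => by show (if l = ℓ₀ then k else M) ≤ M; split <;> omega, hmar ℓ₀ k hk⟩
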